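/- Let X be a compact topological space, x₁,…,x_n ∈ X, and let V := C(X, ℝ) be the space of continuous real-valued functions on X with the supremum norm and its Borel σ-algebra. Let (U, ‖·‖_U) be a normed real vector space together with an injective linear map ι : U → V satisfying ‖ι u‖_∞ ≤ c ‖u‖_U for some constant c and all u ∈ U. Let σ : ℝ → ℝ be L-Lipschitz, and let μ_base be a probability measure on ℝ × V with ā := ∫ |a| dμ_base(a,h) < ∞ and such that, for each k, (a,h) ↦ a σ(h(x_k)) is μ_base-integrable. For κ ≥ 0, let F†_∞(U, μ_base, κ) be the set of functions f : X → ℝ for which there exist a probability measure μ on ℝ × V and a probability measure π on ℝ × V × V such that: the pushforward of π under (a,h,h') ↦ (a,h) is μ_base, the pushforward under (a,h,h') ↦ (a,h') is μ, the set { (a,h,h') : there is u ∈ U with ‖u‖_U ≤ κ and h' = h + ι u } has π-outer measure 1, and for every x ∈ X the map (a,h') ↦ a σ(h'(x)) is μ-integrable with f(x) = ∫ a σ(h'(x)) dμ(a,h'). Then the empirical Rademacher complexities satisfy R̂(F†_∞(U, μ_base, κ)) ≤ L ā R̂(B_κ), where B_κ := { x ↦ (ι u)(x) : u ∈ U, ‖u‖_U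 ≤ κ }. (Here the couplings fix the outer coefficient a and only transport the feature map h, corresponding to a zero learning rate for the last layer.) -/

import Mathlib

open MeasureTheory

noncomputable section

/-- The set of signed sums `∑_k τ_k f(x_k)`, `f ∈ 𝒜`, for a fixed sign pattern
`s` (with `true ↦ +1`, `false ↦ -1`). -/
def radSet {X : Type*} (n : ℕ) (x : Fin n → X) (𝒜 : Set (X → ℝ))
    (s : Fin n → Bool) : Set ℝ :=
  {r : ℝ | ∃ f ∈ 𝒜, r = ∑ k : Fin n, (if s k then (1 : ℝ) else -1) * f (x k)}

/-- The empirical Rademacher complexity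
`R̂(𝒜) = (1/n) E_τ [ sup_{f ∈ 𝒜} ∑_k τ_k f(x_k) ]`, the expectation over the
uniform sign vector written as an average over all `2^n` sign patterns. -/
def empRad {X : Type*} (n : ℕ) (x : Fin n → X) (𝒜 : Set (X → ℝ)) : ℝ :=
  (n : ℝ)⁻¹ * ((2 ^ n : ℝ))⁻¹ * ∑ s : Fin n → Bool, sSup (radSet n x 𝒜 s)

end

namespace RadProofAux

noncomputable section

def sgn (b : Bool) : ℝ := if b then 1 else -1

lemma abs_sgn (b : Bool) : |sgn b| = 1 := by cases b <;> simp [sgn]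

lemma sgn_not (b : Bool) : sgn (!b) = -sgn b := by cases b <;> simp [sgn]

def SSet {n : ℕ} (T : Set (Fin n → ℝ)) (ψ : Fin n → ℝ → ℝ) (ε : Fin n → Bool) : Set ℝ :=
  {r : ℝ | ∃ v ∈ T, r = ∑ k : Fin n, sgn (ε k) * ψ k (v k)}

variable {n : ℕ} {T : Set (Fin n → ℝ)} {C K : ℝ}

lemma elem_abs_le (hK : 0 ≤ K) (hC : ∀ v ∈ T, ∀ k, |v k| ≤ C)
    {ψ : Fin n → ℝ → ℝ} (hψ : ∀ k s t, |ψ k s - ψ k t| ≤ K * |s - t|)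
    (ε : Fin n → Bool) {v : Fin n → ℝ} (hv : v ∈ T) :
    |∑ k : Fin n, sgn (ε k) * ψ k (v k)| ≤ ∑ k : Fin n, (|ψ k 0| + K * C) := by
  refine (Finset.abs_sum_le_sum_abs _ _).trans (Finset.sum_le_sum fun k _ => ?_)
  rw [abs_mul, abs_sgn, one_mul]
  have h1 : |ψ k (v k) - ψ k 0| ≤ K * |v k| := by simpa using hψ k (v k) 0
  have h2 := hC v hv k
  have h3 : K * |v k| ≤ K * C := mul_le_mul_of_nonneg_left h2 hK
  have h4 : |ψ k (v k)| ≤ |ψ k (v k) - ψ k 0| + |ψ k 0| := by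
    have := abs_add_le (ψ k (v k) - ψ k 0) (ψ k 0)
    simpa using this
  linarith

lemma bddAbove_SSet (hK : 0 ≤ K) (hC : ∀ v ∈ T, ∀ k, |v k| ≤ C)
    {ψ : Fin n → ℝ → ℝ} (hψ : ∀ k s t, |ψ k s - ψ k t| ≤ K * |s - t|)
    (ε : Fin n → Bool) : BddAbove (SSet T ψ ε) := by
  refine ⟨∑ k : Fin n, (|ψ k 0| + K * C), ?_⟩
  rintro r ⟨v, hv, rfl⟩
  exact (abs_le.1 (elem_abs_le hK hC hψ ε hv)).2

lemma nonempty_SSet {v₀ : Fin n → ℝ} (hv₀ : v₀ ∈ T) (ψ : Fin n → ℝ → ℝ)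
    (ε : Fin n → Bool) : (SSet T ψ ε).Nonempty :=
  ⟨_, v₀, hv₀, rfl⟩

lemma abs_sSup_SSet {v₀ : Fin n → ℝ} (hv₀ : v₀ ∈ T) (hK : 0 ≤ K)
    (hC : ∀ v ∈ T, ∀ k, |v k| ≤ C)
    {ψ : Fin n → ℝ → ℝ} (hψ : ∀ k s t, |ψ k s - ψ k t| ≤ K * |s - t|)
    (ε : Fin n → Bool) : |sSup (SSet T ψ ε)| ≤ ∑ k : Fin n, (|ψ k 0| + K * C) := by
  rw [abs_le]
  constructor
  · refine le_trans ?_ (le_csSup (bddAbove_SSet hK hC hψ ε) ⟨v₀, hv₀, rfl⟩)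
    exact (abs_le.1 (elem_abs_le hK hC hψ ε hv₀)).1.trans' (by simp)
  · exact csSup_le (nonempty_SSet hv₀ ψ ε)
      (by rintro r ⟨v, hv, rfl⟩; exact (abs_le.1 (elem_abs_le hK hC hψ ε hv)).2)

lemma sum_le_sum_pair {α : Type*} [Fintype α] (e : α ≃ α) (F G : α → ℝ)
    (h : ∀ a, F a + F (e a) ≤ G a + G (e a)) : ∑ a, F a ≤ ∑ a, G a := by
  have h1 : ∑ a, F (e a) = ∑ a, F a := Equiv.sum_comp e F
  have h2 : ∑ a, G (e a) = ∑ a, G a := Equiv.sum_comp e G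
  have h3 : ∑ a, (F a + F (e a)) ≤ ∑ a, (G a + G (e a)) :=
    Finset.sum_le_sum fun a _ => h a
  rw [Finset.sum_add_distrib, Finset.sum_add_distrib, h1, h2] at h3
  linarith

def flipFun {n : ℕ} (j : Fin n) : (Fin n → Bool) → (Fin n → Bool) :=
  fun ε => Function.update ε j (!ε j)

lemma flipFun_involutive {n : ℕ} (j : Fin n) : Function.Involutive (flipFun j) := by
  intro ε
  funext k
  by_cases hk : k = j
  · subst hk; simp [flipFun]
  · simp [flipFun, Function.update_of_ne hk]

def flipPerm {n : ℕ} (j : Fin n) : (Fin n → Bool) ≃ (Fin n → Bool) :=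
  (flipFun_involutive j).toPerm _

lemma flipPerm_apply {n : ℕ} (j : Fin n) (ε : Fin n → Bool) :
    flipPerm j ε = Function.update ε j (!ε j) := rfl

lemma sum_sgn_eq_zero (k : Fin n) : ∑ ε : Fin n → Bool, sgn (ε k) = 0 := by
  have h1 : ∑ ε : Fin n → Bool, sgn ((flipPerm k) ε k) = ∑ ε : Fin n → Bool, sgn (ε k) :=
    Equiv.sum_comp (flipPerm k) (fun ε => sgn (ε k))
  have h2 : ∀ ε : Fin n → Bool, sgn ((flipPerm k) ε k) = -sgn (ε k) := by
    intro ε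
    rw [flipPerm_apply]
    simp [sgn_not]
  rw [Finset.sum_congr rfl (fun ε _ => h2 ε)] at h1
  rw [Finset.sum_neg_distrib] at h1
  linarith

lemma sup_add_sup_le (hne : T.Nonempty) (A : (Fin n → ℝ) → ℝ) (φ : ℝ → ℝ)
    (hφ : ∀ s t, |φ s - φ t| ≤ K * |s - t|) (j : Fin n)
    (h3 : BddAbove {r : ℝ | ∃ v ∈ T, r = A v + K * v j})
    (h4 : BddAbove {r : ℝ | ∃ v ∈ T, r = A v - K * v j}) :
    sSup {r : ℝ | ∃ v ∈ T, r = A v + φ (v j)} + sSup {r : ℝ | ∃ v ∈ T, r = A v - φ (v j)} ≤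
      sSup {r : ℝ | ∃ v ∈ T, r = A v + K * v j} + sSup {r : ℝ | ∃ v ∈ T, r = A v - K * v j} := by
  obtain ⟨v₀, hv₀⟩ := hne
  set R := sSup {r : ℝ | ∃ v ∈ T, r = A v + K * v j} + sSup {r : ℝ | ∃ v ∈ T, r = A v - K * v j}
    with hR
  have key : ∀ v ∈ T, ∀ w ∈ T, (A v + φ (v j)) + (A w - φ (w j)) ≤ R := by
    intro v hv w hw
    rcases le_total (w j) (v j) with hc | hc
    · have hd : φ (v j) - φ (w j) ≤ K * (v j - w j) := by
        have h := hφ (v j) (w j)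
        have habs : |v j - w j| = v j - w j := abs_of_nonneg (sub_nonneg.2 hc)
        rw [habs] at h
        exact (le_abs_self _).trans h
      have e1 : A v + K * v j ≤ sSup {r : ℝ | ∃ v ∈ T, r = A v + K * v j} :=
        le_csSup h3 ⟨v, hv, rfl⟩
      have e2 : A w - K * w j ≤ sSup {r : ℝ | ∃ v ∈ T, r = A v - K * v j} :=
        le_csSup h4 ⟨w, hw, rfl⟩
      rw [hR]; nlinarith
    · have hd : φ (v j) - φ (w j) ≤ K * (w j - v j) := by
        have h := hφ (v j) (w j)
        have habs : |v j - w j| = w j - v j := by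
          rw [abs_sub_comm]; exact abs_of_nonneg (sub_nonneg.2 hc)
        rw [habs] at h
        exact (le_abs_self _).trans h
      have e1 : A w + K * w j ≤ sSup {r : ℝ | ∃ v ∈ T, r = A v + K * v j} :=
        le_csSup h3 ⟨w, hw, rfl⟩
      have e2 : A v - K * v j ≤ sSup {r : ℝ | ∃ v ∈ T, r = A v - K * v j} :=
        le_csSup h4 ⟨v, hv, rfl⟩
      rw [hR]; nlinarith
  have hs2 : sSup {r : ℝ | ∃ v ∈ T, r = A v - φ (v j)} ≤
      R - sSup {r : ℝ | ∃ v ∈ T, r = A v + φ (v j)} := by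
    refine csSup_le ⟨_, ⟨v₀, hv₀, rfl⟩⟩ ?_
    rintro b ⟨w, hw, rfl⟩
    have hs1 : sSup {r : ℝ | ∃ v ∈ T, r = A v + φ (v j)} ≤ R - (A w - φ (w j)) := by
      refine csSup_le ⟨_, ⟨v₀, hv₀, rfl⟩⟩ ?_
      rintro a ⟨v, hv, rfl⟩
      have := key v hv w hw
      linarith
    linarith
  linarith

lemma lipschitz_linear (hK : 0 ≤ K) : ∀ (s t : ℝ), |K * s - K * t| ≤ K * |s - t| := by
  intro s t
  rw [← mul_sub, abs_mul, abs_of_nonneg hK]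

lemma contraction_aux (hne : T.Nonempty) (hC : ∀ v ∈ T, ∀ k, |v k| ≤ C)
    (hK : 0 ≤ K) (φ : Fin n → ℝ → ℝ)
    (hφ : ∀ k s t, |φ k s - φ k t| ≤ K * |s - t|) (S : Finset (Fin n)) :
    ∑ ε : Fin n → Bool, sSup (SSet T (fun k t => if k ∈ S then φ k t else K * t) ε) ≤
      ∑ ε : Fin n → Bool, sSup (SSet T (fun _ t => K * t) ε) := by
  classical
  induction S using Finset.induction_on with
  | empty =>
      simp only [Finset.notMem_empty, if_false]
      exact le_rfl
  | @insert j S hj ih =>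
      refine le_trans ?_ ih
      set ψ' : Fin n → ℝ → ℝ := fun k t => if k ∈ insert j S then φ k t else K * t with hψ'def
      set ψS : Fin n → ℝ → ℝ := fun k t => if k ∈ S then φ k t else K * t with hψSdef
      have hψSlip : ∀ k s t, |ψS k s - ψS k t| ≤ K * |s - t| := by
        intro k s t
        simp only [hψSdef]
        split_ifs with h
        · exact hφ k s t
        · exact lipschitz_linear hK s t
      have main : ∀ ε : Fin n → Bool, ε j = true →
          sSup (SSet T ψ' ε) + sSup (SSet T ψ' (flipPerm j ε)) ≤
          sSup (SSet T ψS ε) + sSup (SSet T ψS (flipPerm j ε)) := by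
        intro ε hεj
        set ε' : Fin n → Bool := flipPerm j ε with hε'def
        have hε'j : ε' j = false := by
          rw [hε'def, flipPerm_apply]; simp [hεj]
        have hε'k : ∀ k : Fin n, k ≠ j → ε' k = ε k := by
          intro k hk
          rw [hε'def, flipPerm_apply, Function.update_of_ne hk]
        set A : (Fin n → ℝ) → ℝ :=
          fun v => ∑ k ∈ Finset.univ.erase j, sgn (ε k) * ψS k (v k) with hAdef
        have hsum1 : ∀ v : Fin n → ℝ,
            ∑ k : Fin n, sgn (ε k) * ψ' k (v k) = A v + φ j (v j) := by
          intro v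
          rw [← Finset.add_sum_erase _ _ (Finset.mem_univ j), add_comm]
          congr 1
          · refine Finset.sum_congr rfl fun k hk => ?_
            have hkj : k ≠ j := Finset.ne_of_mem_erase hk
            simp only [hψ'def, hψSdef, Finset.mem_insert, hkj, false_or]
          · simp [sgn, hεj, hψ'def]
        have hsum2 : ∀ v : Fin n → ℝ,
            ∑ k : Fin n, sgn (ε' k) * ψ' k (v k) = A v - φ j (v j) := by
          intro v
          rw [← Finset.add_sum_erase _ _ (Finset.mem_univ j), add_comm]
          have e1 : ∑ k ∈ Finset.univ.erase j, sgn (ε' k) * ψ' k (v k) = A v := by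
            refine Finset.sum_congr rfl fun k hk => ?_
            have hkj : k ≠ j := Finset.ne_of_mem_erase hk
            rw [hε'k k hkj]
            simp only [hψ'def, hψSdef, Finset.mem_insert, hkj, false_or]
          rw [e1]
          have e2 : sgn (ε' j) * ψ' j (v j) = -φ j (v j) := by
            simp [sgn, hε'j, hψ'def]
          rw [e2]
          ring
        have hsum3 : ∀ v : Fin n → ℝ,
            ∑ k : Fin n, sgn (ε k) * ψS k (v k) = A v + K * v j := by
          intro v
          rw [← Finset.add_sum_erase _ _ (Finset.mem_univ j), add_comm]
          congr 1
          simp [sgn, hεj, hψSdef, hj]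
        have hsum4 : ∀ v : Fin n → ℝ,
            ∑ k : Fin n, sgn (ε' k) * ψS k (v k) = A v - K * v j := by
          intro v
          rw [← Finset.add_sum_erase _ _ (Finset.mem_univ j), add_comm]
          have e1 : ∑ k ∈ Finset.univ.erase j, sgn (ε' k) * ψS k (v k) = A v := by
            refine Finset.sum_congr rfl fun k hk => ?_
            rw [hε'k k (Finset.ne_of_mem_erase hk)]
          rw [e1]
          have e2 : sgn (ε' j) * ψS j (v j) = -(K * v j) := by
            simp [sgn, hε'j, hψSdef, hj]
          rw [e2]
          ring
        have eS1 : SSet T ψ' ε = {r : ℝ | ∃ v ∈ T, r = A v + φ j (v j)} := by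
          unfold SSet; ext r; simp only [hsum1]
        have eS2 : SSet T ψ' ε' = {r : ℝ | ∃ v ∈ T, r = A v - φ j (v j)} := by
          unfold SSet; ext r; simp only [hsum2]
        have eS3 : SSet T ψS ε = {r : ℝ | ∃ v ∈ T, r = A v + K * v j} := by
          unfold SSet; ext r; simp only [hsum3]
        have eS4 : SSet T ψS ε' = {r : ℝ | ∃ v ∈ T, r = A v - K * v j} := by
          unfold SSet; ext r; simp only [hsum4]
        rw [eS1, eS2, eS3, eS4]
        exact sup_add_sup_le hne A (φ j) (hφ j) j
          (eS3 ▸ bddAbove_SSet hK hC hψSlip ε)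
          (eS4 ▸ bddAbove_SSet hK hC hψSlip ε')
      refine sum_le_sum_pair (flipPerm j) _ _ fun ε => ?_
      rcases Bool.eq_false_or_eq_true (ε j) with hεj | hεj
      · exact main ε hεj
      · have h := main (flipPerm j ε) (by rw [flipPerm_apply]; simp [hεj])
        have hinv : flipPerm j (flipPerm j ε) = ε :=
          flipFun_involutive j ε
        rw [hinv] at h
        linarith

lemma contraction {v₀ : Fin n → ℝ} (hv₀ : v₀ ∈ T) (hC : ∀ v ∈ T, ∀ k, |v k| ≤ C)
    (hK : 0 ≤ K) (φ : Fin n → ℝ → ℝ)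
    (hφ : ∀ k s t, |φ k s - φ k t| ≤ K * |s - t|) :
    ∑ ε : Fin n → Bool, sSup (SSet T φ ε) ≤
      K * ∑ ε : Fin n → Bool, sSup (SSet T (fun _ t => t) ε) := by
  classical
  have h1 := contraction_aux ⟨v₀, hv₀⟩ hC hK φ hφ Finset.univ
  have e : (fun k t => if k ∈ (Finset.univ : Finset (Fin n)) then φ k t else K * t) = φ := by
    funext k t; simp
  rw [e] at h1
  refine h1.trans ?_
  rw [Finset.mul_sum]
  refine Finset.sum_le_sum fun ε _ => ?_
  refine csSup_le (nonempty_SSet hv₀ _ ε) ?_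
  rintro r ⟨v, hv, rfl⟩
  have e2 : ∑ k : Fin n, sgn (ε k) * (K * v k) = K * ∑ k : Fin n, sgn (ε k) * v k := by
    rw [Finset.mul_sum]; exact Finset.sum_congr rfl fun k _ => by ring
  rw [e2]
  refine mul_le_mul_of_nonneg_left ?_ hK
  exact le_csSup (bddAbove_SSet (K := 1) zero_le_one hC
    (fun k s t => by simp) ε) ⟨v, hv, rfl⟩

lemma lip_phi {σ : ℝ → ℝ} {L : NNReal} (hσ : LipschitzWith L σ)
    (a : ℝ) (cc : Fin n → ℝ) :
    ∀ k s t, |a * (σ (cc k + s) - σ (cc k)) - a * (σ (cc k + t) - σ (cc k))| ≤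
      (|a| * L) * |s - t| := by
  intro k s t
  have h := hσ.dist_le_mul (cc k + s) (cc k + t)
  rw [Real.dist_eq, Real.dist_eq, add_sub_add_left_eq_sub] at h
  have e : a * (σ (cc k + s) - σ (cc k)) - a * (σ (cc k + t) - σ (cc k)) =
      a * (σ (cc k + s) - σ (cc k + t)) := by ring
  rw [e, abs_mul]
  calc |a| * |σ (cc k + s) - σ (cc k + t)| ≤ |a| * (L * |s - t|) :=
        mul_le_mul_of_nonneg_left h (abs_nonneg a)
    _ = (|a| * L) * |s - t| := by ring

lemma measurable_S {v₀ : Fin n → ℝ} (hv₀ : v₀ ∈ T)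
    (hC : ∀ v ∈ T, ∀ k, |v k| ≤ C)
    {σ : ℝ → ℝ} {L : NNReal} (hσ : LipschitzWith L σ) (ε : Fin n → Bool) :
    Measurable (fun p : ℝ × (Fin n → ℝ) =>
      sSup (SSet T (fun k t => p.1 * (σ (p.2 k + t) - σ (p.2 k))) ε)) := by
  apply LowerSemicontinuous.measurable
  intro p₀ y hy
  obtain ⟨r, hr, hyr⟩ := exists_lt_of_lt_csSup
    (nonempty_SSet hv₀ (fun k t => p₀.1 * (σ (p₀.2 k + t) - σ (p₀.2 k))) ε) hy
  obtain ⟨v, hv, rfl⟩ := hr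
  have hσc : Continuous σ := hσ.continuous
  have hcont : Continuous fun p : ℝ × (Fin n → ℝ) =>
      ∑ k : Fin n, sgn (ε k) * (p.1 * (σ (p.2 k + v k) - σ (p.2 k))) := by
    refine continuous_finset_sum _ fun k _ => ?_
    refine continuous_const.mul (continuous_fst.mul ?_)
    exact ((hσc.comp (((continuous_apply k).comp continuous_snd).add continuous_const)).sub
      (hσc.comp ((continuous_apply k).comp continuous_snd)))
  filter_upwards [(hcont.tendsto p₀).eventually (lt_mem_nhds hyr)] with p hp
  refine hp.trans_le (le_csSup ?_ ⟨v, hv, rfl⟩)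
  exact bddAbove_SSet (mul_nonneg (abs_nonneg p.1) L.coe_nonneg) hC
    (lip_phi hσ p.1 p.2) ε

end

end RadProofAux

noncomputable section

/-- Continuous function spaces are equipped with the Borel σ-algebra of their
(compact-open) topology; for a compact domain this is the Borel σ-algebra of
the supremum norm. -/
instance instContinuousMapMeasurableSpace (X : Type*) [TopologicalSpace X] :
    MeasurableSpace C(X, ℝ) := borel C(X, ℝ)

open RadProofAux in
/-- Rademacher complexity of the transport-based function
class `F†_∞(U, μ_base, κ)`, untrained last layer. -/
theorem rademacher_transport_class
    (X : Type*) [TopologicalSpace X] [CompactSpace X] (n : ℕ) (x : Fin n → X)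
    (U : Type*) [NormedAddCommGroup U] [NormedSpace ℝ U]
    (ι : U →ₗ[ℝ] C(X, ℝ)) (hι_inj : Function.Injective ι)
    (hι_bdd : ∃ c : ℝ, ∀ u : U, ‖ι u‖ ≤ c * ‖u‖)
    (σ : ℝ → ℝ) (L : NNReal) (hσ_lip : LipschitzWith L σ)
    (μbase : Measure (ℝ × C(X, ℝ))) (hμbase : IsProbabilityMeasure μbase)
    (hInt_a : Integrable (fun w : ℝ × C(X, ℝ) => |w.1|) μbase)
    (hInt_k : ∀ k : Fin n,
      Integrable (fun w : ℝ × C(X, ℝ) => w.1 * σ (w.2 (x k))) μbase)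
    (κ : ℝ) (hκ : 0 ≤ κ)
    -- the transport-based class `F†_∞(U, μ_base, κ)`
    (F : Set (X → ℝ))
    (hF : F = {f : X → ℝ | ∃ μ : Measure (ℝ × C(X, ℝ)),
      ∃ π : Measure (ℝ × C(X, ℝ) × C(X, ℝ)),
      IsProbabilityMeasure μ ∧ IsProbabilityMeasure π ∧
      π.map (fun w : ℝ × C(X, ℝ) × C(X, ℝ) => (w.1, w.2.1)) = μbase ∧
      π.map (fun w : ℝ × C(X, ℝ) × C(X, ℝ) => (w.1, w.2.2)) = μ ∧
      π {w : ℝ × C(X, ℝ) × C(X, ℝ) |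
          ∃ u : U, ‖u‖ ≤ κ ∧ w.2.2 = w.2.1 + ι u} = 1 ∧
      ∀ x' : X, Integrable (fun w : ℝ × C(X, ℝ) => w.1 * σ (w.2 x')) μ ∧
        f x' = ∫ w : ℝ × C(X, ℝ), w.1 * σ (w.2 x') ∂μ})
    -- the ball of radius `κ` of `U`, viewed as a class of functions on `X`
    (Bκ : Set (X → ℝ))
    (hBκ : Bκ = {g : X → ℝ | ∃ u : U, ‖u‖ ≤ κ ∧ g = fun x' => (ι u) x'})
    -- the suprema in the Rademacher complexities are assumed finite
    (hFbdd : ∀ s : Fin n → Bool, BddAbove (radSet n x F s))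
    (hBbdd : ∀ s : Fin n → Bool, BddAbove (radSet n x Bκ s)) :
    empRad n x F ≤ (L : ℝ) * (∫ w : ℝ × C(X, ℝ), |w.1| ∂μbase) * empRad n x Bκ := by
  classical
  haveI : BorelSpace C(X, ℝ) := ⟨rfl⟩
  haveI := hμbase
  obtain ⟨cb, hcb⟩ := hι_bdd
  -- the coordinate set T
  set T : Set (Fin n → ℝ) := {v | ∃ u : U, ‖u‖ ≤ κ ∧ v = fun k => (ι u) (x k)} with hTdef
  have hv₀ : (fun _ => (0 : ℝ)) ∈ T := by
    refine ⟨0, by simpa using hκ, ?_⟩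
    funext k
    simp
  set C : ℝ := |cb| * κ with hCdef
  have hC : ∀ v ∈ T, ∀ k, |v k| ≤ C := by
    rintro v ⟨u, hu, rfl⟩ k
    have h1 : ‖(ι u) (x k)‖ ≤ ‖ι u‖ := ContinuousMap.norm_coe_le_norm (ι u) (x k)
    rw [Real.norm_eq_abs] at h1
    have h2 := hcb u
    have h3 : cb * ‖u‖ ≤ |cb| * κ := by
      nlinarith [le_abs_self cb, abs_nonneg cb, norm_nonneg u, hu]
    calc |(fun k => (ι u) (x k)) k| = |(ι u) (x k)| := rfl
      _ ≤ C := by rw [hCdef]; linarith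
  -- the sup function S and its pullback Sb
  have hlip : ∀ (a : ℝ) (cc : Fin n → ℝ) (k : Fin n) (s t : ℝ),
      |a * (σ (cc k + s) - σ (cc k)) - a * (σ (cc k + t) - σ (cc k))| ≤
        (|a| * L) * |s - t| := fun a cc => lip_phi hσ_lip a cc
  set S : ℝ × (Fin n → ℝ) → (Fin n → Bool) → ℝ := fun p ε =>
    sSup (SSet T (fun k t => p.1 * (σ (p.2 k + t) - σ (p.2 k))) ε) with hSdef
  have hSmeas : ∀ ε, Measurable fun p : ℝ × (Fin n → ℝ) => S p ε :=
    fun ε => measurable_S hv₀ hC hσ_lip ε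
  have habsS : ∀ (p : ℝ × (Fin n → ℝ)) (ε : Fin n → Bool),
      |S p ε| ≤ n * ((|p.1| * L) * C) := by
    intro p ε
    have h := abs_sSup_SSet hv₀ (mul_nonneg (abs_nonneg p.1) L.coe_nonneg) hC
      (hlip p.1 p.2) ε
    simpa using h
  have heval : ∀ x' : X, Measurable fun h : C(X, ℝ) => h x' := fun x' =>
    (continuous_eval_const x').measurable
  have hσc : Continuous σ := hσ_lip.continuous
  have hgmeas : ∀ k : Fin n, Measurable fun w : ℝ × C(X, ℝ) => w.1 * σ (w.2 (x k)) :=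
    fun k => measurable_fst.mul (hσc.measurable.comp ((heval (x k)).comp measurable_snd))
  set Sb : (Fin n → Bool) → ℝ × C(X, ℝ) → ℝ := fun ε w => S (w.1, fun k => w.2 (x k)) ε
    with hSbdef
  have hq'meas : Measurable fun w : ℝ × C(X, ℝ) =>
      ((w.1, fun k => w.2 (x k)) : ℝ × (Fin n → ℝ)) :=
    measurable_fst.prodMk (measurable_pi_lambda _ fun k => (heval (x k)).comp measurable_snd)
  have hSbmeas : ∀ ε, Measurable (Sb ε) := fun ε => (hSmeas ε).comp hq'meas
  have habsSb : ∀ (ε : Fin n → Bool) (w : ℝ × C(X, ℝ)),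
      |Sb ε w| ≤ ((n : ℝ) * (L * C)) * |w.1| := by
    intro ε w
    have h := habsS (w.1, fun k => w.2 (x k)) ε
    calc |Sb ε w| ≤ n * ((|w.1| * L) * C) := h
      _ = ((n : ℝ) * (L * C)) * |w.1| := by ring
  have hSbint : ∀ ε, Integrable (Sb ε) μbase := by
    intro ε
    refine (hInt_a.const_mul ((n : ℝ) * (L * C))).mono ((hSbmeas ε).aestronglyMeasurable)
      (ae_of_all _ fun w => ?_)
    rw [Real.norm_eq_abs, Real.norm_eq_abs, abs_mul, abs_abs]
    calc |Sb ε w| ≤ ((n : ℝ) * (L * C)) * |w.1| := habsSb ε w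
      _ ≤ |(n : ℝ) * (L * C)| * |w.1| :=
        mul_le_mul_of_nonneg_right (le_abs_self _) (abs_nonneg _)
  set cInt : Fin n → ℝ := fun k => ∫ w : ℝ × C(X, ℝ), w.1 * σ (w.2 (x k)) ∂μbase
    with hcIntdef
  -- identification of radSet Bκ with SSet T id
  have hBset : ∀ ε : Fin n → Bool, SSet T (fun _ t => t) ε = radSet n x Bκ ε := by
    intro ε
    ext r
    constructor
    · rintro ⟨v, ⟨u, hu, rfl⟩, rfl⟩
      exact ⟨fun x' => (ι u) x', hBκ ▸ ⟨u, hu, rfl⟩, Finset.sum_congr rfl fun k _ => rfl⟩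
    · rintro ⟨g, hg, rfl⟩
      rw [hBκ] at hg
      obtain ⟨u, hu, rfl⟩ := hg
      exact ⟨fun k => (ι u) (x k), ⟨u, hu, rfl⟩, Finset.sum_congr rfl fun k _ => rfl⟩
  set R : ℝ := ∑ ε : Fin n → Bool, sSup (radSet n x Bκ ε) with hRdef
  have hsupB_nonneg : ∀ ε : Fin n → Bool, 0 ≤ sSup (radSet n x Bκ ε) := by
    intro ε
    refine le_csSup (hBbdd ε) ?_
    refine ⟨fun x' => (ι 0) x', hBκ ▸ ⟨0, by simpa using hκ, rfl⟩, ?_⟩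
    simp
  have hRnonneg : 0 ≤ R := Finset.sum_nonneg fun ε _ => hsupB_nonneg ε
  -- pointwise contraction bound
  have hcontr : ∀ w : ℝ × C(X, ℝ),
      ∑ ε : Fin n → Bool, Sb ε w ≤ |w.1| * ((L : ℝ) * R) := by
    intro w
    have h := contraction hv₀ hC
      (mul_nonneg (abs_nonneg w.1) L.coe_nonneg)
      (fun k t => w.1 * (σ (w.2 (x k) + t) - σ (w.2 (x k))))
      (hlip w.1 (fun k => w.2 (x k)))
    simp only [hBset] at h
    refine le_trans ?_ (le_of_eq (by ring :
      (|w.1| * (L : ℝ)) * R = |w.1| * ((L : ℝ) * R)))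
    exact h
  -- the key per-function bound
  have key : ∀ (ε : Fin n → Bool) (f : X → ℝ), f ∈ F →
      ∑ k : Fin n, sgn (ε k) * f (x k) ≤
        (∫ w, Sb ε w ∂μbase) + ∑ k : Fin n, sgn (ε k) * cInt k := by
    intro ε f hf
    rw [hF] at hf
    obtain ⟨μ, π, hμp, hπp, hmap2, hmap3, hone, hint⟩ := hf
    haveI := hμp; haveI := hπp
    have hp2 : Measurable fun w : ℝ × C(X, ℝ) × C(X, ℝ) => (w.1, w.2.1) :=
      measurable_fst.prodMk (measurable_fst.comp measurable_snd)
    have hp3 : Measurable fun w : ℝ × C(X, ℝ) × C(X, ℝ) => (w.1, w.2.2) :=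
      measurable_fst.prodMk (measurable_snd.comp measurable_snd)
    have hint3 : ∀ k : Fin n,
        Integrable (fun w : ℝ × C(X, ℝ) × C(X, ℝ) => w.1 * σ (w.2.2 (x k))) π := by
      intro k
      have h := (hint (x k)).1
      rw [← hmap3] at h
      exact (integrable_map_measure (hgmeas k).aestronglyMeasurable hp3.aemeasurable).mp h
    have hint2 : ∀ k : Fin n,
        Integrable (fun w : ℝ × C(X, ℝ) × C(X, ℝ) => w.1 * σ (w.2.1 (x k))) π := by
      intro k
      have h := hInt_k k
      rw [← hmap2] at h
      exact (integrable_map_measure (hgmeas k).aestronglyMeasurable hp2.aemeasurable).mp h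
    set D : ℝ × C(X, ℝ) × C(X, ℝ) → ℝ := fun w =>
      ∑ k : Fin n, sgn (ε k) * (w.1 * (σ (w.2.2 (x k)) - σ (w.2.1 (x k)))) with hDdef
    have hDint : Integrable D π := by
      rw [hDdef]
      refine integrable_finset_sum _ fun k _ => ?_
      have e : (fun w : ℝ × C(X, ℝ) × C(X, ℝ) =>
          sgn (ε k) * (w.1 * (σ (w.2.2 (x k)) - σ (w.2.1 (x k))))) =
          fun w : ℝ × C(X, ℝ) × C(X, ℝ) =>
            sgn (ε k) * ((w.1 * σ (w.2.2 (x k))) - (w.1 * σ (w.2.1 (x k)))) := by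
        funext w; ring
      rw [e]
      exact ((hint3 k).sub (hint2 k)).const_mul _
    have hDmeas : Measurable D := by
      rw [hDdef]
      refine Finset.measurable_sum _ fun k _ => ?_
      refine measurable_const.mul (measurable_fst.mul ?_)
      exact ((hσc.measurable.comp ((heval (x k)).comp (measurable_snd.comp measurable_snd))).sub
        (hσc.measurable.comp ((heval (x k)).comp (measurable_fst.comp measurable_snd))))
    have hSb2meas : Measurable fun w : ℝ × C(X, ℝ) × C(X, ℝ) => Sb ε (w.1, w.2.1) :=
      (hSbmeas ε).comp hp2
    have habsπ : Integrable (fun w : ℝ × C(X, ℝ) × C(X, ℝ) => |w.1|) π := by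
      have h := hInt_a
      rw [← hmap2] at h
      exact (integrable_map_measure (measurable_fst.abs.aestronglyMeasurable)
        hp2.aemeasurable).mp h
    have hSb2int : Integrable (fun w : ℝ × C(X, ℝ) × C(X, ℝ) => Sb ε (w.1, w.2.1)) π := by
      refine (habsπ.const_mul ((n : ℝ) * (L * C))).mono hSb2meas.aestronglyMeasurable
        (ae_of_all _ fun w => ?_)
      rw [Real.norm_eq_abs, Real.norm_eq_abs, abs_mul, abs_abs]
      calc |Sb ε (w.1, w.2.1)| ≤ ((n : ℝ) * (L * C)) * |w.1| := habsSb ε (w.1, w.2.1)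
        _ ≤ |(n : ℝ) * (L * C)| * |w.1| :=
          mul_le_mul_of_nonneg_right (le_abs_self _) (abs_nonneg _)
    have hae : ∀ᵐ w ∂π, D w ≤ Sb ε (w.1, w.2.1) := by
      have hAmeas : MeasurableSet {w : ℝ × C(X, ℝ) × C(X, ℝ) | D w ≤ Sb ε (w.1, w.2.1)} :=
        measurableSet_le hDmeas hSb2meas
      have hsub : {w : ℝ × C(X, ℝ) × C(X, ℝ) | ∃ u : U, ‖u‖ ≤ κ ∧ w.2.2 = w.2.1 + ι u} ⊆
          {w : ℝ × C(X, ℝ) × C(X, ℝ) | D w ≤ Sb ε (w.1, w.2.1)} := by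
        rintro w ⟨u, hu, hw⟩
        have hvT : (fun k => (ι u) (x k)) ∈ T := ⟨u, hu, rfl⟩
        have hmem : D w ∈ SSet T
            (fun k t => w.1 * (σ (w.2.1 (x k) + t) - σ (w.2.1 (x k)))) ε := by
          refine ⟨fun k => (ι u) (x k), hvT, ?_⟩
          simp only [hDdef]
          refine Finset.sum_congr rfl fun k _ => ?_
          rw [hw]
          simp [ContinuousMap.add_apply]
        exact le_csSup (bddAbove_SSet
          (mul_nonneg (abs_nonneg w.1) L.coe_nonneg) hC
          (hlip w.1 (fun k => w.2.1 (x k))) ε) hmem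
      have h1 : π {w : ℝ × C(X, ℝ) × C(X, ℝ) | D w ≤ Sb ε (w.1, w.2.1)} = 1 :=
        le_antisymm prob_le_one (le_trans (le_of_eq hone.symm) (measure_mono hsub))
      have h0 : π {w : ℝ × C(X, ℝ) × C(X, ℝ) | D w ≤ Sb ε (w.1, w.2.1)}ᶜ = 0 := by
        rw [measure_compl hAmeas (measure_ne_top π _), measure_univ, h1, tsub_self]
      refine MeasureTheory.ae_iff.mpr ?_
      rw [← Set.compl_setOf]
      exact h0
    have hfx : ∀ k : Fin n,
        f (x k) = ∫ w : ℝ × C(X, ℝ) × C(X, ℝ), w.1 * σ (w.2.2 (x k)) ∂π := by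
      intro k
      rw [(hint (x k)).2, ← hmap3,
        integral_map hp3.aemeasurable (hgmeas k).aestronglyMeasurable]
    have hstep1 : ∑ k : Fin n, sgn (ε k) * f (x k) =
        ∫ w, (D w + ∑ k : Fin n, sgn (ε k) * (w.1 * σ (w.2.1 (x k)))) ∂π := by
      have e1 : ∀ k ∈ (Finset.univ : Finset (Fin n)), sgn (ε k) * f (x k) =
          ∫ w : ℝ × C(X, ℝ) × C(X, ℝ), sgn (ε k) * (w.1 * σ (w.2.2 (x k))) ∂π := by
        intro k _
        rw [hfx k]
        exact (integral_const_mul _ _).symm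
      rw [Finset.sum_congr rfl e1,
        ← integral_finset_sum _ fun k _ => (hint3 k).const_mul (sgn (ε k))]
      refine integral_congr_ae (ae_of_all _ fun w => ?_)
      simp only [hDdef]
      rw [← Finset.sum_add_distrib]
      exact Finset.sum_congr rfl fun k _ => by ring
    have hstep2 : ∑ k : Fin n, sgn (ε k) * f (x k) ≤
        (∫ w, Sb ε (w.1, w.2.1) ∂π) +
          ∫ w, (∑ k : Fin n, sgn (ε k) * (w.1 * σ (w.2.1 (x k)))) ∂π := by
      rw [hstep1,
        integral_add hDint (integrable_finset_sum _ fun k _ => (hint2 k).const_mul _)]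
      exact add_le_add (integral_mono_ae hDint hSb2int hae) le_rfl
    refine hstep2.trans (le_of_eq ?_)
    congr 1
    · rw [← hmap2, integral_map hp2.aemeasurable (hSbmeas ε).aestronglyMeasurable]
    · rw [integral_finset_sum _ fun k _ => (hint2 k).const_mul _]
      refine Finset.sum_congr rfl fun k _ => ?_
      rw [integral_const_mul]
      congr 1
      simp only [hcIntdef]
      rw [← hmap2, integral_map hp2.aemeasurable (hgmeas k).aestronglyMeasurable]
  -- assembling
  rcases Set.eq_empty_or_nonempty F with hFe | hFne
  · have hrad : ∀ ε : Fin n → Bool, radSet n x F ε = (∅ : Set ℝ) := by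
      intro ε
      rw [hFe]
      ext r
      simp [radSet]
    have hL0 : empRad n x F = 0 := by
      simp only [empRad]
      rw [Finset.sum_congr rfl fun ε _ => by rw [hrad ε, Real.sSup_empty]]
      simp
    rw [hL0]
    have h2 : 0 ≤ empRad n x Bκ := by
      simp only [empRad]
      refine mul_nonneg (mul_nonneg (inv_nonneg.2 (Nat.cast_nonneg n))
        (inv_nonneg.2 (by positivity))) ?_
      exact Finset.sum_nonneg fun ε _ => hsupB_nonneg ε
    refine mul_nonneg (mul_nonneg L.coe_nonneg ?_) h2
    exact integral_nonneg fun w => abs_nonneg _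
  · have hsupF : ∀ ε : Fin n → Bool, sSup (radSet n x F ε) ≤
        (∫ w, Sb ε w ∂μbase) + ∑ k : Fin n, sgn (ε k) * cInt k := by
      intro ε
      obtain ⟨f₀, hf₀⟩ := hFne
      refine csSup_le ⟨_, ⟨f₀, hf₀, rfl⟩⟩ ?_
      rintro r ⟨f, hf, rfl⟩
      exact key ε f hf
    have hzero : ∑ ε : Fin n → Bool, ∑ k : Fin n, sgn (ε k) * cInt k = 0 := by
      rw [Finset.sum_comm]
      refine Finset.sum_eq_zero fun k _ => ?_
      rw [← Finset.sum_mul, sum_sgn_eq_zero k, zero_mul]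
    have hchain : ∑ ε : Fin n → Bool, sSup (radSet n x F ε) ≤
        (∫ w : ℝ × C(X, ℝ), |w.1| ∂μbase) * ((L : ℝ) * R) := by
      calc ∑ ε : Fin n → Bool, sSup (radSet n x F ε)
          ≤ ∑ ε : Fin n → Bool,
              ((∫ w, Sb ε w ∂μbase) + ∑ k : Fin n, sgn (ε k) * cInt k) :=
            Finset.sum_le_sum fun ε _ => hsupF ε
        _ = ∑ ε : Fin n → Bool, (∫ w, Sb ε w ∂μbase) := by
            rw [Finset.sum_add_distrib, hzero, add_zero]
        _ = ∫ w, (∑ ε : Fin n → Bool, Sb ε w) ∂μbase :=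
            (integral_finset_sum _ fun ε _ => hSbint ε).symm
        _ ≤ ∫ w, |w.1| * ((L : ℝ) * R) ∂μbase :=
            integral_mono (integrable_finset_sum _ fun ε _ => hSbint ε)
              (hInt_a.mul_const _) fun w => hcontr w
        _ = (∫ w : ℝ × C(X, ℝ), |w.1| ∂μbase) * ((L : ℝ) * R) := by
            rw [integral_mul_const]
    have hconst : (0 : ℝ) ≤ (n : ℝ)⁻¹ * ((2 ^ n : ℝ))⁻¹ := by positivity
    simp only [empRad]
    rw [← hRdef]
    calc (n : ℝ)⁻¹ * ((2 ^ n : ℝ))⁻¹ * ∑ s : Fin n → Bool, sSup (radSet n x F s)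
        ≤ (n : ℝ)⁻¹ * ((2 ^ n : ℝ))⁻¹ *
            ((∫ w : ℝ × C(X, ℝ), |w.1| ∂μbase) * ((L : ℝ) * R)) :=
          mul_le_mul_of_nonneg_left hchain hconst
      _ = (L : ℝ) * (∫ w : ℝ × C(X, ℝ), |w.1| ∂μbase) *
            ((n : ℝ)⁻¹ * ((2 ^ n : ℝ))⁻¹ * R) := by ring

end
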